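/- Let 0 < A_avg < A_max, let p = A_avg/A_max, and define g(β) = ((1-p)·β² + p·A_max²) / ((1-p)·β + p·A_max) for β ≥ 0. Then the function h(β) = β - g(β)/2 is strictly increasing on [0, ∞); in fact its derivative is greater than 1/2 everywhere on [0,∞). -/

import Mathlib

theorem stmt_2 (A_avg A_max : ℝ) (h0 : 0 < A_avg) (h1 : A_avg < A_max) :
    let p := A_avg / A_max
    let g : ℝ → ℝ := fun β =>
      ((1 - p) * β ^ 2 + p * A_max ^ 2) / ((1 - p) * β + p * A_max)
    let h : ℝ → ℝ := fun β => β - g β / 2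
    StrictMonoOn h (Set.Ici 0) ∧ ∀ β ∈ Set.Ici (0 : ℝ), 1 / 2 < deriv h β := by
  intro p g h
  have hAmax : 0 < A_max := h0.trans h1
  have hp0 : 0 < p := div_pos h0 hAmax
  have hp1 : p < 1 := (div_lt_one hAmax).2 h1
  have hq : 0 < 1 - p := by linarith
  have hD : ∀ β : ℝ, 0 ≤ β → 0 < (1 - p) * β + p * A_max := by
    intro β hβ
    have := mul_pos hp0 hAmax
    nlinarith
  have hderiv : ∀ β : ℝ, 0 ≤ β →
      HasDerivAt h (1 - ((2 * (1 - p) * β * ((1 - p) * β + p * A_max) -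
        ((1 - p) * β ^ 2 + p * A_max ^ 2) * (1 - p)) /
        ((1 - p) * β + p * A_max) ^ 2) / 2) β := by
    intro β hβ
    have hd := hD β hβ
    have hnum : HasDerivAt (fun x : ℝ => (1 - p) * x ^ 2 + p * A_max ^ 2)
        (2 * (1 - p) * β) β := by
      have := ((hasDerivAt_pow 2 β).const_mul (1 - p)).add_const (p * A_max ^ 2)
      simpa [mul_comm, mul_assoc, mul_left_comm] using this
    have hden : HasDerivAt (fun x : ℝ => (1 - p) * x + p * A_max) (1 - p) β := by
      simpa using ((hasDerivAt_id β).const_mul (1 - p)).add_const (p * A_max)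
    have hg : HasDerivAt g ((2 * (1 - p) * β * ((1 - p) * β + p * A_max) -
        ((1 - p) * β ^ 2 + p * A_max ^ 2) * (1 - p)) /
        ((1 - p) * β + p * A_max) ^ 2) β := hnum.div hden hd.ne'
    exact (hasDerivAt_id' β).sub (hg.div_const 2)
  have key : ∀ β : ℝ, 0 ≤ β → 1 / 2 < deriv h β := by
    intro β hβ
    rw [(hderiv β hβ).deriv]
    have hd := hD β hβ
    have hlt : (2 * (1 - p) * β * ((1 - p) * β + p * A_max) -
        ((1 - p) * β ^ 2 + p * A_max ^ 2) * (1 - p)) /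
        ((1 - p) * β + p * A_max) ^ 2 < 1 := by
      rw [div_lt_one (by positivity)]
      nlinarith [mul_pos hp0 (mul_pos hAmax hAmax), sq_nonneg ((1 - p) * β)]
    linarith
  constructor
  · apply strictMonoOn_of_deriv_pos (convex_Ici 0)
    · exact fun β hβ => ((hderiv β hβ).differentiableAt.continuousAt).continuousWithinAt
    · intro β hβ
      rw [interior_Ici] at hβ
      have := key β (le_of_lt hβ)
      linarith
  · exact fun β hβ => key β hβ
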